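/- The unital *-subalgebra of B(F_m) generated by {a_i : i ∈ ℤ} equals the linear span of the set of all λ-forms and all π-forms; in particular, every element of the *-algebra generated by the monotone creation and annihilation operators is a finite linear combination of λ-forms and π-forms. -/

import Mathlib

open scoped InnerProductSpace ComplexOrder
open ContinuousLinearMap Filter

noncomputable section

/-- The monotone Fock space `F_m = ℓ²(Finset ℤ)`, the Hilbert space of square-summable
complex families indexed by the finite subsets of `ℤ`. -/
abbrev Fm : Type := lp (fun _ : Finset ℤ => ℂ) 2

/-- The canonical orthonormal basis vector `e_A`, for `A` a finite subset of `ℤ`;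
`e ∅` is the vacuum vector `Ω`. -/
noncomputable def e (A : Finset ℤ) : Fm := lp.single 2 A 1

/-- `adag` is the family of monotone creation operators: `adag i` sends `e A` to
`e (A ∪ {i})` if `A = ∅` or `i < min A` (equivalently, `i < j` for all `j ∈ A`),
and to `0` otherwise. -/
def CreatesOn (adag : ℤ → (Fm →L[ℂ] Fm)) : Prop :=
  ∀ (i : ℤ) (A : Finset ℤ),
    adag i (e A) = if ∀ j ∈ A, i < j then e (insert i A) else 0

/-- `a` is the family of monotone annihilation operators: `a i` sends `e A` to
`e (A \ {i})` if `A ≠ ∅` and `i = min A` (equivalently, `i ∈ A` and `i ≤ j` for all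
`j ∈ A`), and to `0` otherwise. -/
def AnnihilatesOn (a : ℤ → (Fm →L[ℂ] Fm)) : Prop :=
  ∀ (i : ℤ) (A : Finset ℤ),
    a i (e A) = if i ∈ A ∧ ∀ j ∈ A, i ≤ j then e (A.erase i) else 0

/-- A λ-form: an operator `X = a†_{i_1}⋯a†_{i_m} a_{j_1}⋯a_{j_n}` with
`i_1 < ⋯ < i_m` and `j_1 > ⋯ > j_n` (the identity `I` when `m = n = 0`). -/
def IsLambdaForm (a adag : ℤ → (Fm →L[ℂ] Fm)) (X : Fm →L[ℂ] Fm) : Prop :=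
  ∃ is js : List ℤ, is.Chain' (· < ·) ∧ js.Chain' (· > ·) ∧
    X = (is.map adag).prod * (js.map a).prod

/-- A π-form: an operator `X = a†_{i_1}⋯a†_{i_m} a_k a†_k a_{j_1}⋯a_{j_n}` with
`i_1 < ⋯ < i_m`, `j_1 > ⋯ > j_n`, `k > i_m` and `k > j_1` (equivalently, `k` exceeds
every index occurring in the increasing and decreasing strings). -/
def IsPiForm (a adag : ℤ → (Fm →L[ℂ] Fm)) (X : Fm →L[ℂ] Fm) : Prop :=
  ∃ (is js : List ℤ) (k : ℤ), is.Chain' (· < ·) ∧ js.Chain' (· > ·) ∧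
    (∀ i ∈ is, i < k) ∧ (∀ j ∈ js, j < k) ∧
    X = (is.map adag).prod * (a k * adag k) * (js.map a).prod

/-! ### auxiliary lemmas -/


set_option linter.unusedSectionVars false

lemma e_apply (A B : Finset ℤ) : (e A : ∀ _ : Finset ℤ, ℂ) B = if B = A then 1 else 0 := by
  simp [e, lp.single_apply, Pi.single_apply]

lemma coord (x : Fm) (B : Finset ℤ) : ⟪e B, x⟫_ℂ = x B := by
  simp [e, lp.inner_single_left]

lemma clm_ext_basis {T S : Fm →L[ℂ] Fm} (h : ∀ A, T (e A) = S (e A)) : T = S := by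
  refine ContinuousLinearMap.ext fun x => ?_
  have hs : HasSum (fun A : Finset ℤ => lp.single 2 A (x A)) x :=
    lp.hasSum_single (by norm_num) x
  have h2 : ∀ A : Finset ℤ, lp.single 2 A (x A) = (x A) • e A := by
    intro A
    rw [e, ← lp.single_smul]
    norm_num
  have hT : HasSum (fun A : Finset ℤ => T (lp.single 2 A (x A))) (T x) := hs.mapL T
  have hS : HasSum (fun A : Finset ℤ => S (lp.single 2 A (x A))) (S x) := hs.mapL S
  refine hT.unique ?_
  convert hS using 2 with A
  simp [h2, h]

section ops
variable {a adag : ℤ → (Fm →L[ℂ] Fm)} (ha : AnnihilatesOn a) (hadag : CreatesOn adag)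
include ha hadag

lemma adag_eq_star (i : ℤ) : adag i = star (a i) := by
  rw [ContinuousLinearMap.star_eq_adjoint]
  refine clm_ext_basis fun A => ?_
  refine lp.ext (funext fun B => ?_)
  have h1 : ((ContinuousLinearMap.adjoint (a i)) (e A) : ∀ _ : Finset ℤ, ℂ) B
      = ⟪a i (e B), e A⟫_ℂ := by
    rw [← coord, ContinuousLinearMap.adjoint_inner_right]
  show ((adag i) (e A) : ∀ _ : Finset ℤ, ℂ) B = _
  rw [h1, ha i B, hadag i A]
  split_ifs with h2 hc hc
  · rw [coord, e_apply, e_apply]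
    have hiff : B = insert i A ↔ B.erase i = A := by
      constructor
      · rintro rfl
        exact Finset.erase_insert (fun hiA => lt_irrefl i (h2 i hiA))
      · rintro rfl
        exact (Finset.insert_erase hc.1).symm
    split_ifs with h3 h4 h4
    · rfl
    · exact absurd (hiff.1 h3) h4
    · exact absurd (hiff.2 h4) h3
    · rfl
  · rw [inner_zero_left, e_apply, if_neg]
    intro h3
    subst h3
    exact hc ⟨Finset.mem_insert_self i A, by
      rintro j hj
      rcases Finset.mem_insert.1 hj with rfl | hjA
      · exact le_refl _
      · exact le_of_lt (h2 j hjA)⟩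
  · rw [coord, e_apply, if_neg]
    · simp
    · intro h3
      apply h2
      intro j hj
      rw [← h3] at hj
      obtain ⟨hne, hjB⟩ := Finset.mem_erase.1 hj
      exact lt_of_le_of_ne (hc.2 j hjB) (Ne.symm hne)
  · simp

lemma hP (k : ℤ) (A : Finset ℤ) :
    (a k * adag k) (e A) = if ∀ j ∈ A, k < j then e A else 0 := by
  rw [ContinuousLinearMap.mul_apply, hadag k A]
  split_ifs with hc
  · rw [ha, if_pos, Finset.erase_insert]
    · intro hk
      exact lt_irrefl k (hc k hk)
    · refine ⟨Finset.mem_insert_self _ _, fun j hj => ?_⟩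
      rcases Finset.mem_insert.1 hj with rfl | hj
      · exact le_refl _
      · exact le_of_lt (hc j hj)
  · simp

lemma adag_adag {i j : ℤ} (h : j ≤ i) : adag i * adag j = 0 := by
  refine clm_ext_basis fun A => ?_
  rw [ContinuousLinearMap.mul_apply, hadag j A]
  split_ifs with hc
  · rw [hadag, if_neg]
    · simp
    · intro hall
      exact absurd (hall j (Finset.mem_insert_self j A)) (not_lt.2 h)
  · simp

lemma a_a {i j : ℤ} (h : i ≤ j) : a i * a j = 0 := by
  refine clm_ext_basis fun A => ?_
  rw [ContinuousLinearMap.mul_apply, ha j A]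
  split_ifs with hc
  · rw [ha, if_neg]
    · simp
    · rintro ⟨hi, -⟩
      obtain ⟨hne, hiA⟩ := Finset.mem_erase.1 hi
      exact hne (le_antisymm h (hc.2 i hiA))
  · simp

lemma a_adag_ne {i j : ℤ} (h : i ≠ j) : a i * adag j = 0 := by
  refine clm_ext_basis fun A => ?_
  rw [ContinuousLinearMap.mul_apply, hadag j A]
  split_ifs with hc
  · rw [ha, if_neg]
    · simp
    · rintro ⟨hi, hle⟩
      rcases Finset.mem_insert.1 hi with rfl | hiA
      · exact h rfl
      · exact absurd (hle j (Finset.mem_insert_self j A)) (not_le.2 (hc i hiA))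
  · simp

lemma P_adag_lt {k j : ℤ} (h : k < j) : (a k * adag k) * adag j = adag j := by
  refine clm_ext_basis fun A => ?_
  rw [ContinuousLinearMap.mul_apply, hadag j A]
  split_ifs with hc
  · rw [hP ha hadag, if_pos]
    intro m hm
    rcases Finset.mem_insert.1 hm with rfl | hm
    · exact h
    · exact h.trans (hc m hm)
  · simp

lemma a_P_lt {k j : ℤ} (h : k < j) : a j * (a k * adag k) = a j := by
  refine clm_ext_basis fun A => ?_
  rw [ContinuousLinearMap.mul_apply, hP ha hadag]
  split_ifs with hc
  · rfl
  · rw [ha, if_neg]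
    · simp
    · rintro ⟨hj, hle⟩
      exact hc fun m hm => lt_of_lt_of_le h (hle m hm)

lemma a_P_ge {k j : ℤ} (h : j ≤ k) : a j * (a k * adag k) = 0 := by
  refine clm_ext_basis fun A => ?_
  rw [ContinuousLinearMap.mul_apply, hP ha hadag]
  split_ifs with hc
  · rw [ha, if_neg]
    · simp
    · rintro ⟨hj, -⟩
      exact absurd (hc j hj) (not_lt.2 h)
  · simp

lemma P_a_le {k j : ℤ} (h : k ≤ j) : (a k * adag k) * a j = a j := by
  refine clm_ext_basis fun A => ?_
  rw [ContinuousLinearMap.mul_apply, ha j A]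
  split_ifs with hc
  · rw [hP ha hadag, if_pos]
    intro m hm
    obtain ⟨hne, hmA⟩ := Finset.mem_erase.1 hm
    exact lt_of_le_of_lt h (lt_of_le_of_ne (hc.2 m hmA) (Ne.symm hne))
  · simp

lemma adag_P_le {k p : ℤ} (h : k ≤ p) : adag p * (a k * adag k) = adag p := by
  refine clm_ext_basis fun A => ?_
  rw [ContinuousLinearMap.mul_apply, hP ha hadag]
  split_ifs with hc
  · rfl
  · rw [hadag, if_neg]
    · simp
    · intro hall
      exact hc fun m hm => lt_of_le_of_lt h (hall m hm)

lemma P_P_le {p k : ℤ} (h : p ≤ k) : (a p * adag p) * (a k * adag k) = a k * adag k := by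
  refine clm_ext_basis fun A => ?_
  rw [ContinuousLinearMap.mul_apply, hP ha hadag k A]
  split_ifs with hc
  · rw [hP ha hadag, if_pos]
    exact fun m hm => lt_of_le_of_lt h (hc m hm)
  · simp

/-! ### generator times form lemmas -/

def Forms (a adag : ℤ → (Fm →L[ℂ] Fm)) : Set (Fm →L[ℂ] Fm) :=
  {X : Fm →L[ℂ] Fm | IsLambdaForm a adag X ∨ IsPiForm a adag X}

lemma adag_mul_lambda (p : ℤ) (is js : List ℤ)
    (h1 : is.Chain' (· < ·)) (h2 : js.Chain' (· > ·)) :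
    adag p * ((is.map adag).prod * (js.map a).prod)
      ∈ Submodule.span ℂ (Forms a adag) := by
  match is with
  | [] =>
    refine Submodule.subset_span (Or.inl ⟨[p], js, List.isChain_singleton p, h2, ?_⟩)
    simp [mul_assoc]
  | i :: is' =>
    by_cases hpi : p < i
    · refine Submodule.subset_span
        (Or.inl ⟨p :: i :: is', js, List.isChain_cons_cons.2 ⟨hpi, h1⟩, h2, ?_⟩)
      simp [mul_assoc]
    · suffices hz : adag p * (((i :: is').map adag).prod * (js.map a).prod) = 0 by
        rw [hz]; exact Submodule.zero_mem _
      simp only [List.map_cons, List.prod_cons, mul_assoc]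
      rw [← mul_assoc, adag_adag ha hadag (not_lt.1 hpi), zero_mul]

lemma adag_mul_pi (p : ℤ) (is js : List ℤ) (k : ℤ)
    (h1 : is.Chain' (· < ·)) (h2 : js.Chain' (· > ·))
    (b1 : ∀ i ∈ is, i < k) (b2 : ∀ j ∈ js, j < k) :
    adag p * ((is.map adag).prod * (a k * adag k) * (js.map a).prod)
      ∈ Submodule.span ℂ (Forms a adag) := by
  match is with
  | [] =>
    by_cases hpk : p < k
    · refine Submodule.subset_span
        (Or.inr ⟨[p], js, k, List.isChain_singleton p, h2, ?_, b2, ?_⟩)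
      · intro i hi
        rcases List.mem_singleton.1 hi with rfl
        exact hpk
      · simp [mul_assoc]
    · refine Submodule.subset_span (Or.inl ⟨[p], js, List.isChain_singleton p, h2, ?_⟩)
      simp only [List.map_nil, List.prod_nil, one_mul, List.map_cons, List.prod_cons, mul_one]
      rw [← mul_assoc, adag_P_le ha hadag (not_lt.1 hpk)]
  | i :: is' =>
    by_cases hpi : p < i
    · refine Submodule.subset_span
        (Or.inr ⟨p :: i :: is', js, k, List.isChain_cons_cons.2 ⟨hpi, h1⟩, h2, ?_, b2, ?_⟩)
      · intro x hx
        rcases List.mem_cons.1 hx with rfl | hx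
        · exact hpi.trans (b1 i (List.mem_cons_self))
        · exact b1 x hx
      · simp [mul_assoc]
    · suffices hz :
          adag p * (((i :: is').map adag).prod * (a k * adag k) * (js.map a).prod) = 0 by
        rw [hz]; exact Submodule.zero_mem _
      simp only [List.map_cons, List.prod_cons, mul_assoc]
      rw [← mul_assoc, adag_adag ha hadag (not_lt.1 hpi), zero_mul]

lemma a_mul_lambda (p : ℤ) (is js : List ℤ)
    (h1 : is.Chain' (· < ·)) (h2 : js.Chain' (· > ·)) :
    a p * ((is.map adag).prod * (js.map a).prod)
      ∈ Submodule.span ℂ (Forms a adag) := by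
  match is with
  | [] =>
    match js with
    | [] =>
      refine Submodule.subset_span (Or.inl ⟨[], [p], List.isChain_nil,
        List.isChain_singleton p, ?_⟩)
      simp
    | j :: js' =>
      by_cases hj : j < p
      · refine Submodule.subset_span (Or.inl ⟨[], p :: j :: js', List.isChain_nil,
          List.isChain_cons_cons.2 ⟨hj, h2⟩, ?_⟩)
        simp [mul_assoc]
      · suffices hz :
            a p * ((([] : List ℤ).map adag).prod * ((j :: js').map a).prod) = 0 by
          rw [hz]; exact Submodule.zero_mem _
        simp only [List.map_nil, List.prod_nil, one_mul, List.map_cons, List.prod_cons]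
        rw [← mul_assoc, a_a ha hadag (not_lt.1 hj), zero_mul]
  | i :: is' =>
    by_cases hpi : p = i
    · subst hpi
      match is' with
      | [] =>
        match js with
        | [] =>
          refine Submodule.subset_span (Or.inr ⟨[], [], p, List.isChain_nil,
            List.isChain_nil, by simp, by simp, ?_⟩)
          simp [mul_assoc]
        | j :: js' =>
          by_cases hjp : j < p
          · refine Submodule.subset_span (Or.inr ⟨[], j :: js', p, List.isChain_nil,
              h2, by simp, ?_, ?_⟩)
            · intro x hx
              rcases List.mem_cons.1 hx with rfl | hx
              · exact hjp
              · exact lt_trans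
                  (List.rel_of_pairwise_cons (List.isChain_iff_pairwise.1 h2) hx) hjp
            · simp [mul_assoc]
          · refine Submodule.subset_span (Or.inl ⟨[], j :: js', List.isChain_nil, h2, ?_⟩)
            simp only [List.map_cons, List.map_nil, List.prod_cons, List.prod_nil,
              one_mul, mul_one]
            rw [← mul_assoc, ← mul_assoc, P_a_le ha hadag (not_lt.1 hjp)]
      | i2 :: is'' =>
        refine Submodule.subset_span (Or.inl ⟨i2 :: is'', js,
          (List.isChain_cons_cons.1 h1).2, h2, ?_⟩)
        simp only [List.map_cons, List.prod_cons, ← mul_assoc]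
        rw [P_adag_lt ha hadag (List.isChain_cons_cons.1 h1).1]
    · suffices hz :
          a p * (((i :: is').map adag).prod * (js.map a).prod) = 0 by
        rw [hz]; exact Submodule.zero_mem _
      simp only [List.map_cons, List.prod_cons, mul_assoc]
      rw [← mul_assoc, a_adag_ne ha hadag hpi, zero_mul]

lemma a_mul_pi (p : ℤ) (is js : List ℤ) (k : ℤ)
    (h1 : is.Chain' (· < ·)) (h2 : js.Chain' (· > ·))
    (b1 : ∀ i ∈ is, i < k) (b2 : ∀ j ∈ js, j < k) :
    a p * ((is.map adag).prod * (a k * adag k) * (js.map a).prod)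
      ∈ Submodule.span ℂ (Forms a adag) := by
  match is with
  | [] =>
    by_cases hkp : k < p
    · match js with
      | [] =>
        refine Submodule.subset_span (Or.inl ⟨[], [p], List.isChain_nil,
          List.isChain_singleton p, ?_⟩)
        simp only [List.map_nil, List.prod_nil, one_mul, List.map_cons, List.prod_cons,
          mul_one]
        rw [a_P_lt ha hadag hkp]
      | j :: js' =>
        refine Submodule.subset_span (Or.inl ⟨[], p :: j :: js', List.isChain_nil,
          List.isChain_cons_cons.2 ⟨lt_trans (b2 j (List.mem_cons_self)) hkp, h2⟩, ?_⟩)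
        simp only [List.map_nil, List.prod_nil, one_mul, List.map_cons, List.prod_cons]
        rw [← mul_assoc, ← mul_assoc, a_P_lt ha hadag hkp]
        rw [mul_assoc]
    · suffices hz :
          a p * ((([] : List ℤ).map adag).prod * (a k * adag k) * (js.map a).prod) = 0 by
        rw [hz]; exact Submodule.zero_mem _
      simp only [List.map_nil, List.prod_nil, one_mul]
      rw [← mul_assoc, a_P_ge ha hadag (not_lt.1 hkp), zero_mul]
  | i :: is' =>
    by_cases hpi : p = i
    · subst hpi
      match is' with
      | [] =>
        refine Submodule.subset_span (Or.inr ⟨[], js, k, List.isChain_nil, h2,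
          by simp, b2, ?_⟩)
        have hppl : a p * adag p * a k * adag k = a k * adag k := by
          rw [mul_assoc (a p * adag p),
            P_P_le ha hadag (le_of_lt (b1 p (List.mem_singleton_self p)))]
        simp only [List.map_cons, List.map_nil, List.prod_cons, List.prod_nil,
          one_mul, mul_one, ← mul_assoc]
        rw [hppl]
      | i2 :: is'' =>
        refine Submodule.subset_span (Or.inr ⟨i2 :: is'', js, k,
          (List.isChain_cons_cons.1 h1).2, h2, fun x hx => b1 x (List.mem_cons_of_mem _ hx),
          b2, ?_⟩)
        simp only [List.map_cons, List.prod_cons, ← mul_assoc]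
        rw [P_adag_lt ha hadag (List.isChain_cons_cons.1 h1).1]
    · suffices hz :
          a p * (((i :: is').map adag).prod * (a k * adag k) * (js.map a).prod) = 0 by
        rw [hz]; exact Submodule.zero_mem _
      simp only [List.map_cons, List.prod_cons, mul_assoc]
      rw [← mul_assoc, a_adag_ne ha hadag hpi, zero_mul]

lemma mul_left_mem_span (g x : Fm →L[ℂ] Fm)
    (hg : (∃ p, g = a p) ∨ (∃ p, g = adag p))
    (hx : x ∈ Submodule.span ℂ (Forms a adag)) :
    g * x ∈ Submodule.span ℂ (Forms a adag) := by
  induction hx using Submodule.span_induction with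
  | mem y hy =>
    rcases hy with hl | hp
    · obtain ⟨is, js, c1, c2, rfl⟩ := hl
      rcases hg with ⟨p, rfl⟩ | ⟨p, rfl⟩
      · exact a_mul_lambda ha hadag p is js c1 c2
      · exact adag_mul_lambda ha hadag p is js c1 c2
    · obtain ⟨is, js, k, c1, c2, b1, b2, rfl⟩ := hp
      rcases hg with ⟨p, rfl⟩ | ⟨p, rfl⟩
      · exact a_mul_pi ha hadag p is js k c1 c2 b1 b2
      · exact adag_mul_pi ha hadag p is js k c1 c2 b1 b2
  | zero => rw [mul_zero]; exact Submodule.zero_mem _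
  | add u v _ _ hu hv => rw [mul_add]; exact Submodule.add_mem _ hu hv
  | smul c u _ hu => rw [mul_smul_comm]; exact Submodule.smul_mem _ _ hu

lemma prod_mem_span (l : List (Fm →L[ℂ] Fm))
    (hl : ∀ g ∈ l, g ∈ (Set.range a ∪ star (Set.range a))) :
    l.prod ∈ Submodule.span ℂ (Forms a adag) := by
  induction l with
  | nil =>
    refine Submodule.subset_span (Or.inl ⟨[], [], List.isChain_nil, List.isChain_nil, ?_⟩)
    simp
  | cons g l ih =>
    rw [List.prod_cons]
    refine mul_left_mem_span ha hadag g l.prod ?_ (ih fun u hu => hl u (List.mem_cons_of_mem g hu))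
    rcases hl g (List.mem_cons_self) with hg | hg
    · obtain ⟨p, rfl⟩ := hg
      exact Or.inl ⟨p, rfl⟩
    · have : star g ∈ Set.range a := hg
      obtain ⟨p, hp⟩ := this
      refine Or.inr ⟨p, ?_⟩
      rw [adag_eq_star ha hadag, hp, star_star]

end ops

/-- Lemma 4.3 (Lemma `lampi2`): the unital *-subalgebra `ℜ_m⁰` of `B(F_m)` generated by
the monotone annihilators `{a_i : i ∈ ℤ}` equals the linear span of the λ-forms and the
π-forms; in particular every element of it is a finite linear combination of λ-forms and
π-forms. -/
theorem monotone_star_algebra_eq_span_forms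
    (a adag : ℤ → (Fm →L[ℂ] Fm))
    (ha : AnnihilatesOn a) (hadag : CreatesOn adag) :
    (StarAlgebra.adjoin ℂ (Set.range a) : Set (Fm →L[ℂ] Fm)) =
      (Submodule.span ℂ {X : Fm →L[ℂ] Fm |
        IsLambdaForm a adag X ∨ IsPiForm a adag X} : Set (Fm →L[ℂ] Fm)) := by
  apply Set.Subset.antisymm
  · intro x hx
    have hx' : x ∈ Submodule.span ℂ
        ((Submonoid.closure (Set.range a ∪ star (Set.range a)) : Submonoid _) :
          Set (Fm →L[ℂ] Fm)) := by
      rw [← StarAlgebra.adjoin_eq_span]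
      exact hx
    show x ∈ Submodule.span ℂ (Forms a adag)
    clear hx
    induction hx' using Submodule.span_induction with
    | mem y hy =>
      obtain ⟨l, hl, rfl⟩ := Submonoid.exists_list_of_mem_closure hy
      exact prod_mem_span ha hadag l hl
    | zero => exact Submodule.zero_mem _
    | add u v _ _ hu hv => exact Submodule.add_mem _ hu hv
    | smul c u _ hu => exact Submodule.smul_mem _ _ hu
  · intro x hx
    have hsub : Forms a adag ⊆ (StarAlgebra.adjoin ℂ (Set.range a) : Set (Fm →L[ℂ] Fm)) := by
      have hmem : ∀ i : ℤ, a i ∈ StarAlgebra.adjoin ℂ (Set.range a) :=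
        fun i => StarAlgebra.subset_adjoin ℂ _ (Set.mem_range_self i)
      have hmemd : ∀ i : ℤ, adag i ∈ StarAlgebra.adjoin ℂ (Set.range a) := fun i => by
        rw [adag_eq_star ha hadag]
        exact star_mem (hmem i)
      rintro y (⟨is, js, -, -, rfl⟩ | ⟨is, js, k, -, -, -, -, rfl⟩)
      · exact mul_mem
          (list_prod_mem (by rintro u hu; obtain ⟨i, -, rfl⟩ := List.mem_map.1 hu; exact hmemd i))
          (list_prod_mem (by rintro u hu; obtain ⟨i, -, rfl⟩ := List.mem_map.1 hu; exact hmem i))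
      · exact mul_mem
          (mul_mem
            (list_prod_mem (by rintro u hu; obtain ⟨i, -, rfl⟩ := List.mem_map.1 hu; exact hmemd i))
            (mul_mem (hmem k) (hmemd k)))
          (list_prod_mem (by rintro u hu; obtain ⟨i, -, rfl⟩ := List.mem_map.1 hu; exact hmem i))
    have hle : Submodule.span ℂ (Forms a adag) ≤
        Subalgebra.toSubmodule (StarAlgebra.adjoin ℂ (Set.range a)).toSubalgebra :=
      Submodule.span_le.2 hsub
    exact hle hx

end
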